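/- Let n ≥ 1 and let X : ZMod n → Matrix (Fin I₁) (Fin I₂) ℝ be a third-order real tensor. Then there exist a tensor Q : ZMod n → Matrix (Fin I₁) (Fin I₁) ℝ orthogonal under the t-product and a tensor R : ZMod n → Matrix (Fin I₁) (Fin I₂) ℝ each of whose frontal slices is upper triangular (i.e. (R k) i j = 0 whenever (i : ℕ) > (j : ℕ)) such that X = Q ∗ R (existence of the tensor QR decomposition, t-QR). -/

import Mathlib

open Matrix

variable {n : ℕ}

/-- The t-product of two third-order tensors, modeled as circular convolution
of frontal slices. -/
noncomputable def tMul [NeZero n] {a b c : ℕ}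
    (X : ZMod n → Matrix (Fin a) (Fin b) ℝ) (Y : ZMod n → Matrix (Fin b) (Fin c) ℝ) :
    ZMod n → Matrix (Fin a) (Fin c) ℝ :=
  fun k => ∑ j : ZMod n, X (k - j) * Y j

/-- The tensor transpose: transpose every frontal slice and reverse the order of
the frontal slices 2 through n. -/
def tTranspose {a b : ℕ} (X : ZMod n → Matrix (Fin a) (Fin b) ℝ) :
    ZMod n → Matrix (Fin b) (Fin a) ℝ :=
  fun k => (X (-k))ᵀ

/-- The identity tensor: the first frontal slice is the identity matrix and all
other frontal slices are zero. -/
def tId (n m : ℕ) : ZMod n → Matrix (Fin m) (Fin m) ℝ :=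
  fun k => if k = 0 then 1 else 0

/-- A tensor is orthogonal if `Qᵀ ∗ Q = Q ∗ Qᵀ = I` under the t-product. -/
def tOrthogonal [NeZero n] {m : ℕ} (Q : ZMod n → Matrix (Fin m) (Fin m) ℝ) : Prop :=
  tMul (tTranspose Q) Q = tId n m ∧ tMul Q (tTranspose Q) = tId n m

section AuxQR


lemma qr_exists_aux {𝕜 : Type*} [RCLike 𝕜] {a b : ℕ} (A : Matrix (Fin a) (Fin b) 𝕜) :
    ∃ (Q : Matrix (Fin a) (Fin a) 𝕜) (R : Matrix (Fin a) (Fin b) 𝕜),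
      Qᴴ * Q = 1 ∧ Q * Qᴴ = 1 ∧
      (∀ (i : Fin a) (j : Fin b), (j : ℕ) < (i : ℕ) → R i j = 0) ∧
      A = Q * R := by
  classical
  haveI : WellFoundedLT (Fin a) := inferInstance
  have hdim : Module.finrank 𝕜 (EuclideanSpace 𝕜 (Fin a)) = Fintype.card (Fin a) := by
    simp [finrank_euclideanSpace]
  set f : Fin a → EuclideanSpace 𝕜 (Fin a) := fun i =>
    if h : (i : ℕ) < b then WithLp.toLp 2 (fun r => A r ⟨(i : ℕ), h⟩) else 0 with hf
  set q : OrthonormalBasis (Fin a) 𝕜 (EuclideanSpace 𝕜 (Fin a)) := InnerProductSpace.gramSchmidtOrthonormalBasis (𝕜 := 𝕜) (E := EuclideanSpace 𝕜 (Fin a)) hdim f with hq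
  set Q : Matrix (Fin a) (Fin a) 𝕜 := Matrix.of fun r i => q i r with hQ
  have hQ1 : Qᴴ * Q = 1 := by
    ext i i'
    simp only [Matrix.mul_apply, Matrix.conjTranspose_apply, Matrix.one_apply, hQ,
      Matrix.of_apply]
    have := q.orthonormal
    rcases this with ⟨hn, ho⟩
    by_cases h : i = i'
    · subst h
      have := hn i
      have h2 : (inner 𝕜 (q i) (q i) : 𝕜) = 1 := by
        rw [inner_self_eq_norm_sq_to_K, this]
        simp
      rw [if_pos rfl, ← h2]
      rw [PiLp.inner_apply]
      simp [RCLike.inner_apply, mul_comm, RCLike.mul_conj]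
    · have h2 : (inner 𝕜 (q i) (q i') : 𝕜) = 0 := ho h
      rw [if_neg h, ← h2, PiLp.inner_apply]
      simp [RCLike.inner_apply, mul_comm]
  have hQ2 : Q * Qᴴ = 1 := by
    exact mul_eq_one_comm.mp hQ1
  refine ⟨Q, Qᴴ * A, hQ1, hQ2, ?_, ?_⟩
  · intro i j hij
    have hjb : (j : ℕ) < a := lt_trans hij i.isLt
    have key : (inner 𝕜 (q i) (f ⟨(j : ℕ), hjb⟩) : 𝕜) = 0 := by
      exact InnerProductSpace.gramSchmidtOrthonormalBasis_inv_triangular hdim f hij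
    have hfj : f ⟨(j : ℕ), hjb⟩ = WithLp.toLp 2 (fun r => A r j) := by
      rw [hf]
      simp only [dif_pos j.isLt]
    rw [hfj] at key
    rw [PiLp.inner_apply] at key
    simp only [RCLike.inner_apply] at key
    simp only [Matrix.mul_apply, Matrix.conjTranspose_apply, hQ, Matrix.of_apply]
    rw [← key]
    exact Finset.sum_congr rfl fun x _ => mul_comm _ _
  · rw [← Matrix.mul_assoc, hQ2, Matrix.one_mul]

end AuxQR

section AuxDFT
open Finset


noncomputable def zet (n : ℕ) : ℂ := Complex.exp (2 * Real.pi * Complex.I / n)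

noncomputable def ee {n : ℕ} (k : ZMod n) : ℂ := zet n ^ k.val

variable {n : ℕ} [NeZero n]
set_option linter.unusedSectionVars false

lemma zet_prim : IsPrimitiveRoot (zet n) n :=
  Complex.isPrimitiveRoot_exp n (NeZero.ne n)

lemma zet_pow_n : zet n ^ n = 1 := zet_prim.pow_eq_one

lemma zet_pow_mod (m : ℕ) : zet n ^ (m % n) = zet n ^ m := by
  conv_rhs => rw [← Nat.div_add_mod m n]
  rw [pow_add, pow_mul, zet_pow_n, one_pow, one_mul]

lemma ee_add (a b : ZMod n) : ee (a + b) = ee a * ee b := by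
  unfold ee
  rw [ZMod.val_add, zet_pow_mod, pow_add]

lemma ee_zero : ee (0 : ZMod n) = 1 := by
  unfold ee
  rw [ZMod.val_zero, pow_zero]

lemma ee_mul_neg (k : ZMod n) : ee k * ee (-k) = 1 := by
  rw [← ee_add, add_neg_cancel, ee_zero]

lemma ee_ne_zero (k : ZMod n) : ee k ≠ 0 :=
  left_ne_zero_of_mul_eq_one (ee_mul_neg k)

lemma conj_ee (k : ZMod n) : (starRingEnd ℂ) (ee k) = ee (-k) := by
  have h2 : ee k * (starRingEnd ℂ) (ee k) = 1 := by
    rw [Complex.mul_conj]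
    have hp : ee k ^ n = 1 := by
      unfold ee
      rw [← pow_mul, mul_comm, pow_mul, zet_pow_n, one_pow]
    have habs : ‖ee k‖ = 1 := Complex.norm_eq_one_of_pow_eq_one hp (NeZero.ne n)
    rw [Complex.normSq_eq_norm_sq, habs]
    norm_num
  have := ee_mul_neg k
  exact mul_left_cancel₀ (ee_ne_zero k) (h2.trans this.symm)

lemma ee_mul_eq_pow (m k : ZMod n) : ee (m * k) = ee m ^ k.val := by
  unfold ee
  rw [ZMod.val_mul, zet_pow_mod, pow_mul]

lemma sum_ee (m : ZMod n) :
    (∑ k : ZMod n, ee (m * k)) = if m = 0 then (n : ℂ) else 0 := by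
  have hre : (∑ k : ZMod n, ee (m * k)) = ∑ i ∈ range n, ee m ^ i := by
    rw [Finset.sum_nbij' (fun k => (ZMod.val k : ℕ)) (fun i => (i : ZMod n))]
    · intro k _; exact Finset.mem_range.mpr (ZMod.val_lt k)
    · intro i _; exact Finset.mem_univ _
    · intro k _; exact ZMod.natCast_zmod_val k
    · intro i hi; exact ZMod.val_cast_of_lt (Finset.mem_range.mp hi)
    · intro k _; rw [ee_mul_eq_pow]
  rw [hre]
  by_cases hm : m = 0
  · subst hm
    simp [ee_zero]
  · rw [if_neg hm]
    have hne1 : ee m ≠ 1 := by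
      intro h
      have hdvd := zet_prim.pow_eq_one_iff_dvd (ZMod.val m) |>.mp h
      have hlt := ZMod.val_lt m
      have hnz : ZMod.val m ≠ 0 := fun h0 => hm ((ZMod.val_eq_zero m).mp h0)
      have := Nat.le_of_dvd (Nat.pos_of_ne_zero hnz) hdvd
      omega
    have hpow : ee m ^ n = 1 := by
      unfold ee
      rw [← pow_mul, mul_comm, pow_mul, zet_pow_n, one_pow]
    have := geom_sum_mul (ee m) n
    rw [hpow, sub_self] at this
    rcases mul_eq_zero.mp this with h | h
    · exact h
    · exact absurd (sub_eq_zero.mp h) hne1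

section TensorDFT

variable {a b c : ℕ}

/-- complex t-product -/
noncomputable def tMulC (X : ZMod n → Matrix (Fin a) (Fin b) ℂ)
    (Y : ZMod n → Matrix (Fin b) (Fin c) ℂ) : ZMod n → Matrix (Fin a) (Fin c) ℂ :=
  fun k => ∑ j : ZMod n, X (k - j) * Y j

noncomputable def dftT (X : ZMod n → Matrix (Fin a) (Fin b) ℂ) :
    ZMod n → Matrix (Fin a) (Fin b) ℂ :=
  fun f => ∑ k : ZMod n, ee (f * k) • X k

noncomputable def idftT (Y : ZMod n → Matrix (Fin a) (Fin b) ℂ) :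
    ZMod n → Matrix (Fin a) (Fin b) ℂ :=
  fun k => (n : ℂ)⁻¹ • ∑ f : ZMod n, ee (-(f * k)) • Y f

lemma sum_sum_swap_key (Z : ZMod n → Matrix (Fin a) (Fin b) ℂ) (m m' : ZMod n)
    (h : m = m') : True := trivial

lemma idftT_dftT (X : ZMod n → Matrix (Fin a) (Fin b) ℂ) : idftT (dftT X) = X := by
  funext k
  unfold idftT dftT
  have key : ∀ f : ZMod n, ee (-(f * k)) • ∑ j : ZMod n, ee (f * j) • X j
      = ∑ j : ZMod n, ee (f * (j - k)) • X j := by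
    intro f
    rw [Finset.smul_sum]
    refine Finset.sum_congr rfl fun j _ => ?_
    rw [smul_smul, ← ee_add]
    congr 1
    ring
  simp only [key]
  rw [Finset.sum_comm]
  have key2 : ∀ j : ZMod n, (∑ f : ZMod n, ee (f * (j - k)) • X j)
      = (if j = k then (n : ℂ) else 0) • X j := by
    intro j
    rw [← Finset.sum_smul]
    congr 1
    have : ∀ f : ZMod n, f * (j - k) = (j - k) * f := fun f => mul_comm _ _
    simp only [this]
    rw [sum_ee]
    congr 1
    simp [sub_eq_zero]
  simp only [key2, ite_smul, zero_smul]
  rw [Finset.sum_ite_eq' Finset.univ k (fun j => ((n : ℂ) • X j))]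
  simp only [Finset.mem_univ, if_true]
  rw [smul_smul, inv_mul_cancel₀ (by exact_mod_cast (NeZero.ne n) : (n : ℂ) ≠ 0), one_smul]

lemma dftT_idftT (Y : ZMod n → Matrix (Fin a) (Fin b) ℂ) : dftT (idftT Y) = Y := by
  funext f
  unfold idftT dftT
  have key : ∀ k : ZMod n, ee (f * k) • ((n : ℂ)⁻¹ • ∑ g : ZMod n, ee (-(g * k)) • Y g)
      = (n : ℂ)⁻¹ • ∑ g : ZMod n, ee ((f - g) * k) • Y g := by
    intro k
    rw [smul_comm]
    congr 1
    rw [Finset.smul_sum]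
    refine Finset.sum_congr rfl fun g _ => ?_
    rw [smul_smul, ← ee_add]
    congr 1
    ring
  simp only [key]
  rw [← Finset.smul_sum, Finset.sum_comm]
  have key2 : ∀ g : ZMod n, (∑ k : ZMod n, ee ((f - g) * k) • Y g)
      = (if f = g then (n : ℂ) else 0) • Y g := by
    intro g
    rw [← Finset.sum_smul, sum_ee]
    congr 1
    simp [sub_eq_zero]
  simp only [key2]
  have : ∀ g : ZMod n, (if f = g then (n : ℂ) else 0) • Y g
      = if g = f then (n : ℂ) • Y g else 0 := by
    intro g
    by_cases h : f = g
    · subst h; simp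
    · rw [if_neg h, if_neg (Ne.symm h), zero_smul]
  simp only [this]
  rw [Finset.sum_ite_eq' Finset.univ f (fun g => ((n : ℂ) • Y g))]
  simp only [Finset.mem_univ, if_true]
  rw [smul_smul, inv_mul_cancel₀ (by exact_mod_cast (NeZero.ne n) : (n : ℂ) ≠ 0), one_smul]

lemma dftT_injective : Function.Injective (dftT (n := n) (a := a) (b := b)) := by
  intro X Y h
  have := congrArg idftT h
  rwa [idftT_dftT, idftT_dftT] at this

lemma dftT_tMulC (X : ZMod n → Matrix (Fin a) (Fin b) ℂ)
    (Y : ZMod n → Matrix (Fin b) (Fin c) ℂ) (f : ZMod n) :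
    dftT (tMulC X Y) f = dftT X f * dftT Y f := by
  unfold dftT tMulC
  have key : ∀ k : ZMod n, ee (f * k) • ∑ j : ZMod n, X (k - j) * Y j
      = ∑ j : ZMod n, (ee (f * (k - j)) • X (k - j)) * (ee (f * j) • Y j) := by
    intro k
    rw [Finset.smul_sum]
    refine Finset.sum_congr rfl fun j _ => ?_
    rw [Matrix.smul_mul, Matrix.mul_smul, smul_smul, ← ee_add]
    congr 1
    ring
  simp only [key]
  rw [Finset.sum_comm]
  have key3 : ∀ j : ZMod n, (∑ k : ZMod n, ee (f * (k - j)) • X (k - j) * ee (f * j) • Y j)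
      = (∑ t : ZMod n, ee (f * t) • X t) * (ee (f * j) • Y j) := by
    intro j
    rw [Matrix.sum_mul]
    exact Fintype.sum_equiv (Equiv.subRight j)
      (fun k => ee (f * (k - j)) • X (k - j) * ee (f * j) • Y j)
      (fun t => ee (f * t) • X t * ee (f * j) • Y j) (fun k => rfl)
  simp only [key3]
  rw [← Matrix.mul_sum]


lemma dftT_smul_sum_conj (c : ZMod n → ℂ) (M : ZMod n → Matrix (Fin a) (Fin b) ℂ) :
    (∑ k : ZMod n, c k • M k).map (starRingEnd ℂ)
      = ∑ k : ZMod n, (starRingEnd ℂ) (c k) • (M k).map (starRingEnd ℂ) := by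
  ext i j
  simp [Matrix.sum_apply, Matrix.map_apply]

end TensorDFT

end AuxDFT

section AuxMaps

section MapHelpers
variable {p q r : ℕ}

/-- entrywise complex conjugation of a matrix -/
def cmapM {p q : ℕ} (M : Matrix (Fin p) (Fin q) ℂ) : Matrix (Fin p) (Fin q) ℂ :=
  M.map (starRingEnd ℂ)

/-- entrywise complexification of a real matrix -/
def rmapM {p q : ℕ} (M : Matrix (Fin p) (Fin q) ℝ) : Matrix (Fin p) (Fin q) ℂ :=
  M.map Complex.ofReal

lemma cmapM_cmapM (M : Matrix (Fin p) (Fin q) ℂ) : cmapM (cmapM M) = M := by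
  ext i j; simp [cmapM]

lemma cmapM_mul (M : Matrix (Fin p) (Fin q) ℂ) (N : Matrix (Fin q) (Fin r) ℂ) :
    cmapM (M * N) = cmapM M * cmapM N := by
  ext i j; simp [cmapM, Matrix.mul_apply]

lemma cmapM_one : cmapM (1 : Matrix (Fin p) (Fin p) ℂ) = 1 := by
  ext i j; simp [cmapM, Matrix.one_apply, apply_ite (starRingEnd ℂ)]

lemma cmapM_transpose (M : Matrix (Fin p) (Fin q) ℂ) : (cmapM M)ᵀ = Mᴴ := by
  ext i j; simp [cmapM]

lemma conjTranspose_cmapM (M : Matrix (Fin p) (Fin q) ℂ) : (cmapM M)ᴴ = cmapM Mᴴ := by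
  ext i j; simp [cmapM]

lemma rmapM_mul (M : Matrix (Fin p) (Fin q) ℝ) (N : Matrix (Fin q) (Fin r) ℝ) :
    rmapM (M * N) = rmapM M * rmapM N := by
  ext i j; simp [rmapM, Matrix.mul_apply]

lemma rmapM_one : rmapM (1 : Matrix (Fin p) (Fin p) ℝ) = 1 := by
  ext i j; simp [rmapM, Matrix.one_apply, apply_ite (Complex.ofReal)]

lemma rmapM_inj {M N : Matrix (Fin p) (Fin q) ℝ} (h : rmapM M = rmapM N) : M = N := by
  ext i j
  have := congrFun (congrFun h i) j
  simpa [rmapM] using this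

lemma cmapM_rmapM (M : Matrix (Fin p) (Fin q) ℝ) : cmapM (rmapM M) = rmapM M := by
  ext i j; simp [cmapM, rmapM]

lemma conjTranspose_rmapM (M : Matrix (Fin p) (Fin q) ℝ) : (rmapM M)ᴴ = rmapM Mᴴ := by
  ext i j; simp [rmapM]

lemma rmapM_re_of_selfconj {M : Matrix (Fin p) (Fin q) ℂ} (h : cmapM M = M) :
    rmapM (M.map Complex.re) = M := by
  ext i j
  have hij : (starRingEnd ℂ) (M i j) = M i j := by
    have := congrFun (congrFun h i) j
    simpa [cmapM] using this
  simpa [rmapM] using Complex.conj_eq_iff_re.mp hij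

end MapHelpers

section MoreLemmas
variable {n : ℕ} [NeZero n]
set_option linter.unusedSectionVars false
variable {p q : ℕ}

lemma idftT_apply (U : ZMod n → Matrix (Fin p) (Fin q) ℂ) (k : ZMod n) (i : Fin p) (j : Fin q) :
    idftT U k i j = (n : ℂ)⁻¹ * ∑ f : ZMod n, ee (-(f * k)) * U f i j := by
  simp [idftT, Matrix.sum_apply, Finset.mul_sum]

lemma dftT_tIdC (m : ℕ) (f : ZMod n) :
    dftT (fun k => if k = 0 then (1 : Matrix (Fin m) (Fin m) ℂ) else 0) f = 1 := by
  unfold dftT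
  have : ∀ k : ZMod n, ee (f * k) • (if k = 0 then (1 : Matrix (Fin m) (Fin m) ℂ) else 0)
      = if k = 0 then ee (f * k) • (1 : Matrix (Fin m) (Fin m) ℂ) else 0 := by
    intro k
    split <;> simp
  simp only [this]
  rw [Finset.sum_ite_eq' Finset.univ (0 : ZMod n) (fun k => ee (f * k) • (1 : Matrix (Fin m) (Fin m) ℂ))]
  simp [ee_zero]

lemma idftT_real (U : ZMod n → Matrix (Fin p) (Fin q) ℂ)
    (hsym : ∀ f, U (-f) = cmapM (U f)) (k : ZMod n) :
    cmapM (idftT U k) = idftT U k := by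
  ext i j
  show (starRingEnd ℂ) (idftT U k i j) = idftT U k i j
  rw [idftT_apply, _root_.map_mul, map_inv₀, Complex.conj_natCast, map_sum]
  congr 1
  refine Fintype.sum_equiv (Equiv.neg (ZMod n))
    (fun f => (starRingEnd ℂ) (ee (-(f * k)) * U f i j))
    (fun g => ee (-(g * k)) * U g i j) fun f => ?_
  simp only [Equiv.neg_apply]
  rw [_root_.map_mul, conj_ee, neg_neg]
  have h2 : (starRingEnd ℂ) (U f i j) = U (-f) i j := by
    rw [hsym f]; simp [cmapM]
  rw [h2]
  simp only [neg_mul, neg_neg]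

lemma dftT_trans_real (U : ZMod n → Matrix (Fin p) (Fin p) ℂ)
    (hreal : ∀ k, cmapM (U k) = U k) (f : ZMod n) :
    dftT (fun k => (U (-k))ᵀ) f = (dftT U f)ᴴ := by
  rw [← cmapM_transpose]
  ext i j
  have lhs : dftT (fun k => (U (-k))ᵀ) f i j = ∑ k : ZMod n, ee (f * k) * U (-k) j i := by
    simp [dftT, Matrix.sum_apply]
  have rhs : (cmapM (dftT U f))ᵀ i j = ∑ k : ZMod n, ee (-(f * k)) * U k j i := by
    simp only [transpose_apply, cmapM, Matrix.map_apply, dftT, Matrix.sum_apply,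
      Matrix.smul_apply, smul_eq_mul, map_sum, _root_.map_mul, conj_ee]
    refine Finset.sum_congr rfl fun k _ => ?_
    congr 1
    have := congrFun (congrFun (hreal k) j) i
    simpa [cmapM] using this
  rw [lhs, rhs]
  refine Fintype.sum_equiv (Equiv.neg (ZMod n))
    (fun k => ee (f * k) * U (-k) j i)
    (fun k => ee (-(f * k)) * U k j i) fun k => ?_
  simp only [Equiv.neg_apply, neg_neg]
  rw [mul_neg, neg_neg]

end MoreLemmas

section Complexify
variable {n : ℕ} [NeZero n]
set_option linter.unusedSectionVars false
variable {p q r : ℕ}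

lemma rmap_tMul (Xr : ZMod n → Matrix (Fin p) (Fin q) ℝ)
    (Yr : ZMod n → Matrix (Fin q) (Fin r) ℝ) (k : ZMod n) :
    rmapM (tMul Xr Yr k) = tMulC (fun k => rmapM (Xr k)) (fun k => rmapM (Yr k)) k := by
  show rmapM (∑ j : ZMod n, Xr (k - j) * Yr j) = ∑ j : ZMod n, rmapM (Xr (k - j)) * rmapM (Yr j)
  ext i l
  simp only [rmapM, Matrix.map_apply, Matrix.sum_apply, Matrix.mul_apply]
  push_cast
  rfl

lemma rmap_tTranspose (Qr : ZMod n → Matrix (Fin p) (Fin q) ℝ) (k : ZMod n) :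
    rmapM (tTranspose Qr k) = (rmapM (Qr (-k)))ᵀ := by
  ext i j; simp [rmapM, tTranspose]

lemma rmap_tId (m : ℕ) (k : ZMod n) :
    rmapM (tId n m k) = if k = 0 then (1 : Matrix (Fin m) (Fin m) ℂ) else 0 := by
  unfold tId
  split
  · exact rmapM_one
  · ext i j; simp [rmapM]

end Complexify

end AuxMaps

/-- Existence of the tensor QR decomposition (t-QR): every third-order tensor
factors as `Q ∗ R` with `Q` orthogonal and every frontal slice of `R`
upper triangular. -/
theorem tqr_exists (n I₁ I₂ : ℕ) [NeZero n]
    (X : ZMod n → Matrix (Fin I₁) (Fin I₂) ℝ) :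
    ∃ (Q : ZMod n → Matrix (Fin I₁) (Fin I₁) ℝ)
      (R : ZMod n → Matrix (Fin I₁) (Fin I₂) ℝ),
      tOrthogonal Q ∧
      (∀ (k : ZMod n) (i : Fin I₁) (j : Fin I₂), (j : ℕ) < (i : ℕ) → R k i j = 0) ∧
      X = tMul Q R := by
  classical
  choose qC rC hC1 hC2 hC3 hC4 using fun M : Matrix (Fin I₁) (Fin I₂) ℂ => qr_exists_aux M
  choose qR rR hR1 hR2 hR3 hR4 using fun M : Matrix (Fin I₁) (Fin I₂) ℝ => qr_exists_aux M
  set A : ZMod n → Matrix (Fin I₁) (Fin I₂) ℂ := dftT (fun k => rmapM (X k)) with hA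
  have hAsym : ∀ f : ZMod n, A (-f) = cmapM (A f) := by
    intro f
    show dftT (fun k => rmapM (X k)) (-f) = cmapM (dftT (fun k => rmapM (X k)) f)
    unfold dftT
    rw [show cmapM (∑ k : ZMod n, ee (f * k) • rmapM (X k))
        = (∑ k : ZMod n, ee (f * k) • rmapM (X k)).map (starRingEnd ℂ) from rfl,
      dftT_smul_sum_conj]
    refine Finset.sum_congr rfl fun k _ => ?_
    rw [conj_ee, neg_mul]
    congr 1
    exact (cmapM_rmapM (X k)).symm
  set U : ZMod n → Matrix (Fin I₁) (Fin I₁) ℂ := fun f =>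
    if -f = f then rmapM (qR ((A f).map Complex.re))
    else if (ZMod.val f < ZMod.val (-f)) then qC (A f) else cmapM (qC (A (-f))) with hUdef
  set T : ZMod n → Matrix (Fin I₁) (Fin I₂) ℂ := fun f =>
    if -f = f then rmapM (rR ((A f).map Complex.re))
    else if (ZMod.val f < ZMod.val (-f)) then rC (A f) else cmapM (rC (A (-f))) with hTdef
  have hProp : ∀ f : ZMod n, A f = U f * T f ∧ (U f)ᴴ * U f = 1 ∧ U f * (U f)ᴴ = 1 ∧
      (∀ (i : Fin I₁) (j : Fin I₂), (j : ℕ) < (i : ℕ) → T f i j = 0) ∧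
      U (-f) = cmapM (U f) ∧ T (-f) = cmapM (T f) := by
    intro f
    by_cases h1 : -f = f
    · have hval : U f = rmapM (qR ((A f).map Complex.re)) := by
        rw [hUdef]; simp only [if_pos h1]
      have tval : T f = rmapM (rR ((A f).map Complex.re)) := by
        rw [hTdef]; simp only [if_pos h1]
      have hAf : rmapM ((A f).map Complex.re) = A f :=
        rmapM_re_of_selfconj (by rw [← hAsym f, h1])
      refine ⟨?_, ?_, ?_, ?_, ?_, ?_⟩
      · rw [hval, tval, ← rmapM_mul, ← hR4 ((A f).map Complex.re), hAf]
      · rw [hval, conjTranspose_rmapM, ← rmapM_mul, hR1, rmapM_one]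
      · rw [hval, conjTranspose_rmapM, ← rmapM_mul, hR2, rmapM_one]
      · intro i j hij
        rw [tval]
        show (Complex.ofReal (rR ((A f).map Complex.re) i j)) = 0
        rw [hR3 _ i j hij, Complex.ofReal_zero]
      · rw [show -f = f from h1, hval, cmapM_rmapM]
      · rw [show -f = f from h1, tval, cmapM_rmapM]
    · have h1' : ¬(-(-f) = -f) := by rw [neg_neg]; exact fun h => h1 h.symm
      by_cases h2 : ZMod.val f < ZMod.val (-f)
      · have hval : U f = qC (A f) := by rw [hUdef]; simp only [if_neg h1, if_pos h2]
        have tval : T f = rC (A f) := by rw [hTdef]; simp only [if_neg h1, if_pos h2]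
        have hc1 : ¬(f = -f) := fun h => h1 h.symm
        have hc2 : ¬(ZMod.val (-f) < ZMod.val f) := fun h => lt_asymm h2 h
        have hvaln : U (-f) = cmapM (qC (A f)) := by
          rw [hUdef]; simp only [neg_neg]; rw [if_neg hc1, if_neg hc2]
        have tvaln : T (-f) = cmapM (rC (A f)) := by
          rw [hTdef]; simp only [neg_neg]; rw [if_neg hc1, if_neg hc2]
        refine ⟨?_, ?_, ?_, ?_, ?_, ?_⟩
        · rw [hval, tval]; exact hC4 (A f)
        · rw [hval]; exact hC1 (A f)
        · rw [hval]; exact hC2 (A f)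
        · intro i j hij; rw [tval]; exact hC3 (A f) i j hij
        · rw [hvaln, hval]
        · rw [tvaln, tval]
      · have h3 : ZMod.val (-f) < ZMod.val f := by
          rcases lt_trichotomy (ZMod.val (-f)) (ZMod.val f) with h | h | h
          · exact h
          · exfalso
            have := congrArg (Nat.cast : ℕ → ZMod n) h
            rw [ZMod.natCast_zmod_val, ZMod.natCast_zmod_val] at this
            exact h1 this
          · exact absurd h h2
        have hval : U f = cmapM (qC (A (-f))) := by
          rw [hUdef]; simp only [if_neg h1, if_neg h2]
        have tval : T f = cmapM (rC (A (-f))) := by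
          rw [hTdef]; simp only [if_neg h1, if_neg h2]
        have hc1 : ¬(f = -f) := fun h => h1 h.symm
        have hvaln : U (-f) = qC (A (-f)) := by
          rw [hUdef]; simp only [neg_neg]; rw [if_neg hc1, if_pos h3]
        have tvaln : T (-f) = rC (A (-f)) := by
          rw [hTdef]; simp only [neg_neg]; rw [if_neg hc1, if_pos h3]
        have hfA : A f = cmapM (A (-f)) := by
          have := hAsym (-f); rwa [neg_neg] at this
        refine ⟨?_, ?_, ?_, ?_, ?_, ?_⟩
        · rw [hval, tval, ← cmapM_mul, ← hC4 (A (-f))]; exact hfA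
        · rw [hval, conjTranspose_cmapM, ← cmapM_mul, hC1, cmapM_one]
        · rw [hval, conjTranspose_cmapM, ← cmapM_mul, hC2, cmapM_one]
        · intro i j hij
          rw [tval]
          show (starRingEnd ℂ) (rC (A (-f)) i j) = 0
          rw [hC3 _ i j hij, map_zero]
        · rw [hvaln, hval, cmapM_cmapM]
        · rw [tvaln, tval, cmapM_cmapM]
  have hUsym : ∀ f, U (-f) = cmapM (U f) := fun f => (hProp f).2.2.2.2.1
  have hTsym : ∀ f, T (-f) = cmapM (T f) := fun f => (hProp f).2.2.2.2.2
  set Uc : ZMod n → Matrix (Fin I₁) (Fin I₁) ℂ := idftT U with hUc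
  set Tc : ZMod n → Matrix (Fin I₁) (Fin I₂) ℂ := idftT T with hTcdef
  have hdU : dftT Uc = U := dftT_idftT U
  have hdT : dftT Tc = T := dftT_idftT T
  have hUreal : ∀ k, cmapM (Uc k) = Uc k := fun k => idftT_real U hUsym k
  have hTreal : ∀ k, cmapM (Tc k) = Tc k := fun k => idftT_real T hTsym k
  set Qr : ZMod n → Matrix (Fin I₁) (Fin I₁) ℝ := fun k => (Uc k).map Complex.re with hQrdef
  set Rr : ZMod n → Matrix (Fin I₁) (Fin I₂) ℝ := fun k => (Tc k).map Complex.re with hRrdef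
  have hQrC : ∀ k, rmapM (Qr k) = Uc k := fun k => rmapM_re_of_selfconj (hUreal k)
  have hRrC : ∀ k, rmapM (Rr k) = Tc k := fun k => rmapM_re_of_selfconj (hTreal k)
  have hTrC : ∀ k, rmapM (tTranspose Qr k) = (Uc (-k))ᵀ := by
    intro k
    rw [rmap_tTranspose, hQrC]
  refine ⟨Qr, Rr, ⟨?_, ?_⟩, ?_, ?_⟩
  · -- Qrᵀ ∗ Qr = I
    have key : tMulC (fun k => (Uc (-k))ᵀ) Uc
        = (fun k => if k = 0 then (1 : Matrix (Fin I₁) (Fin I₁) ℂ) else 0) := by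
      apply dftT_injective
      funext f
      rw [dftT_tMulC, dftT_trans_real Uc hUreal f, hdU, dftT_tIdC]
      exact (hProp f).2.1
    funext k
    apply rmapM_inj
    rw [rmap_tMul, rmap_tId]
    have e1 : (fun k => rmapM (tTranspose Qr k)) = (fun k => (Uc (-k))ᵀ) := funext hTrC
    have e2 : (fun k => rmapM (Qr k)) = Uc := funext hQrC
    rw [e1, e2, key]
  · -- Qr ∗ Qrᵀ = I
    have key : tMulC Uc (fun k => (Uc (-k))ᵀ)
        = (fun k => if k = 0 then (1 : Matrix (Fin I₁) (Fin I₁) ℂ) else 0) := by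
      apply dftT_injective
      funext f
      rw [dftT_tMulC, dftT_trans_real Uc hUreal f, hdU, dftT_tIdC]
      exact (hProp f).2.2.1
    funext k
    apply rmapM_inj
    rw [rmap_tMul, rmap_tId]
    have e1 : (fun k => rmapM (tTranspose Qr k)) = (fun k => (Uc (-k))ᵀ) := funext hTrC
    have e2 : (fun k => rmapM (Qr k)) = Uc := funext hQrC
    rw [e1, e2, key]
  · -- triangularity
    intro k i j hij
    have hTc0 : Tc k i j = 0 := by
      show idftT T k i j = 0
      rw [idftT_apply]
      have : ∀ f : ZMod n, ee (-(f * k)) * T f i j = 0 := by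
        intro f
        rw [(hProp f).2.2.2.1 i j hij, mul_zero]
      simp [this]
    show (Tc k i j).re = 0
    rw [hTc0]; rfl
  · -- X = Q ∗ R
    have key : tMulC Uc Tc = (fun k => rmapM (X k)) := by
      apply dftT_injective
      funext f
      rw [dftT_tMulC, hdU, hdT]
      exact ((hProp f).1).symm
    funext k
    apply rmapM_inj
    have e2 : (fun k => rmapM (Qr k)) = Uc := funext hQrC
    have e3 : (fun k => rmapM (Rr k)) = Tc := funext hRrC
    rw [rmap_tMul, e2, e3, key]
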